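/- Let J ⊆ (ℝ,≤)² be a connected and convex subposet and M:J→vect_F a functor such that M(i≤j) is an isomorphism for all i≤j in J. Then for every a ∈ J, the cone on M with apex Ma whose leg at i ∈ J is the (path-independent) zigzag composite M(a⇝i) is a limit cone; in particular lim_J M ≅ Ma for all a ∈ J. -/

import Mathlib

/-- A persistence module over a preorder `P` with coefficients in a field `F`:
a functor `(P,≤) → Vect_F`, given by vector spaces `V p` and linear maps
`map : i ≤ j → (V i →ₗ[F] V j)` satisfying the functoriality equations. -/
structure PersistenceModule (F : Type) [Field F] (P : Type) [Preorder P] where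
  V : P → Type
  [addCommGroup : ∀ p, AddCommGroup (V p)]
  [module : ∀ p, Module F (V p)]
  map : ∀ {i j : P}, i ≤ j → (V i →ₗ[F] V j)
  map_id : ∀ i : P, map (le_refl i) = LinearMap.id
  map_comp : ∀ {i j k : P} (hij : i ≤ j) (hjk : j ≤ k),
    (map hjk).comp (map hij) = map (hij.trans hjk)

attribute [instance] PersistenceModule.addCommGroup PersistenceModule.module

/-- A zigzag path `a - x₁ - ⋯ - xₙ - b` in a preorder, where each consecutive
pair of points is comparable. -/
inductive Zigzag (P : Type) [Preorder P] : P → P → Type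
  | single (a : P) : Zigzag P a a
  | consLe {a b c : P} (h : a ≤ b) (p : Zigzag P b c) : Zigzag P a c
  | consGe {a b c : P} (h : b ≤ a) (p : Zigzag P b c) : Zigzag P a c

/-- Convexity of a subset of a poset: `i ≤ j ≤ k` with `i, k ∈ J` implies `j ∈ J`. -/
def PosetConvex {P : Type} [Preorder P] (J : Set P) : Prop :=
  ∀ i ∈ J, ∀ k ∈ J, ∀ j : P, i ≤ j → j ≤ k → j ∈ J

/-- Connectedness: any two points of `J` are joined by a finite zigzag path inside `J`. -/
def ZigzagConnected {P : Type} [Preorder P] (J : Set P) : Prop :=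
  ∀ a b : J, Nonempty (Zigzag (↥J) a b)

/-- The composite `M(a ⇝ b)` along a zigzag path, using `M̂(i,j) = M(i≤j)` on
good arrows and `M̂(i,j) = M(j≤i)⁻¹` on bad arrows. -/
noncomputable def zigzagMap {F : Type} [Field F] {P : Type} [Preorder P]
    (M : PersistenceModule F P)
    (hiso : ∀ (i j : P) (h : i ≤ j), Function.Bijective (M.map h)) :
    {a b : P} → Zigzag P a b → (M.V a →ₗ[F] M.V b)
  | _, _, .single _ => LinearMap.id
  | _, _, .consLe h p => (zigzagMap M hiso p).comp (M.map h)
  | _, _, .consGe h p =>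
      (zigzagMap M hiso p).comp
        ((LinearEquiv.ofBijective (M.map h) (hiso _ _ h)).symm.toLinearMap)

/-- `L` together with the legs `σ` is a limit cone over the persistence module `M`. -/
def IsLimitCone {F : Type} [Field F] {P : Type} [Preorder P] (M : PersistenceModule F P)
    (L : Type) [AddCommGroup L] [Module F L] (σ : ∀ i : P, L →ₗ[F] M.V i) : Prop :=
  (∀ (i j : P) (h : i ≤ j), (M.map h).comp (σ i) = σ j) ∧
  ∀ (N : Type) [AddCommGroup N] [Module F N] (τ : ∀ i : P, N →ₗ[F] M.V i),
    (∀ (i j : P) (h : i ≤ j), (M.map h).comp (τ i) = τ j) →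
    ∃! φ : N →ₗ[F] L, ∀ i : P, (σ i).comp φ = τ i

-- ===================== auxiliary machinery =====================

/-- Comparability. -/
def Cmp {α : Type} [Preorder α] (x y : α) : Prop := x ≤ y ∨ y ≤ x

section ZigzagOps

variable {P : Type} [Preorder P]

/-- Number of steps of a zigzag. -/
def zlen : {a b : P} → Zigzag P a b → ℕ
  | _, _, .single _ => 0
  | _, _, .consLe _ p => zlen p + 1
  | _, _, .consGe _ p => zlen p + 1

/-- The list of points visited by a zigzag. -/
def zpoints : {a b : P} → Zigzag P a b → List P
  | a, _, .single _ => [a]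
  | a, _, .consLe _ p => a :: zpoints p
  | a, _, .consGe _ p => a :: zpoints p

lemma zpoints_ne_nil {a b : P} (p : Zigzag P a b) : zpoints p ≠ [] := by
  cases p <;> simp [zpoints]

lemma zpoints_head {a b : P} (p : Zigzag P a b) : ∃ t, zpoints p = a :: t := by
  cases p <;> exact ⟨_, rfl⟩

lemma zpoints_getLast {a b : P} (p : Zigzag P a b) :
    (zpoints p).getLast (zpoints_ne_nil p) = b := by
  induction p with
  | single a => rfl
  | consLe h p ih => exact (List.getLast_cons (zpoints_ne_nil p)).trans ih
  | consGe h p ih => exact (List.getLast_cons (zpoints_ne_nil p)).trans ih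

open Classical in
/-- Cons with a mere comparability. -/
noncomputable def consO {x b y : P} (h : Cmp x b) (p : Zigzag P b y) : Zigzag P x y :=
  if hle : x ≤ b then .consLe hle p else .consGe (h.resolve_left hle) p

lemma zlen_consO {x b y : P} (h : Cmp x b) (p : Zigzag P b y) :
    zlen (consO h p) = zlen p + 1 := by
  unfold consO; split <;> rfl

lemma zpoints_consO {x b y : P} (h : Cmp x b) (p : Zigzag P b y) :
    zpoints (consO h p) = x :: zpoints p := by
  unfold consO; split <;> rfl

/-- Concatenation of zigzags. -/
def ztrans : {a b c : P} → Zigzag P a b → Zigzag P b c → Zigzag P a c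
  | _, _, _, .single _, q => q
  | _, _, _, .consLe h p, q => .consLe h (ztrans p q)
  | _, _, _, .consGe h p, q => .consGe h (ztrans p q)

/-- Reversal of a zigzag. -/
def zrev : {a b : P} → Zigzag P a b → Zigzag P b a
  | _, _, .single a => .single a
  | _, _, .consLe h p => ztrans (zrev p) (.consGe h (.single _))
  | _, _, .consGe h p => ztrans (zrev p) (.consLe h (.single _))

end ZigzagOps

section Aux

variable {F : Type} [Field F] {P : Type} [PartialOrder P]
  (M : PersistenceModule F P)
  (hiso : ∀ (i j : P) (h : i ≤ j), Function.Bijective (M.map h))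

/-- The structure map as a linear equivalence. -/
noncomputable def Emap {i j : P} (h : i ≤ j) : M.V i ≃ₗ[F] M.V j :=
  LinearEquiv.ofBijective (M.map h) (hiso i j h)

lemma Emap_apply {i j : P} (h : i ≤ j) (v : M.V i) : Emap M hiso h v = M.map h v := rfl

lemma map_comp_apply {i j k : P} (hij : i ≤ j) (hjk : j ≤ k) (v : M.V i) :
    M.map hjk (M.map hij v) = M.map (hij.trans hjk) v :=
  LinearMap.congr_fun (M.map_comp hij hjk) v

lemma map_refl_apply {i : P} (h : i ≤ i) (v : M.V i) : M.map h v = v := by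
  have : M.map h = M.map (le_refl i) := rfl
  rw [this, M.map_id]; rfl

open Classical in
/-- `M̂(x,y)` for comparable `x y`. -/
noncomputable def Mhat {x y : P} (h : Cmp x y) : M.V x →ₗ[F] M.V y :=
  if hle : x ≤ y then M.map hle
  else ((Emap M hiso (h.resolve_left hle)).symm : M.V x ≃ₗ[F] M.V y).toLinearMap

lemma Emap_symm_apply {i j : P} (h : i ≤ j) (v : M.V j) :
    M.map h ((Emap M hiso h).symm v) = v := (Emap M hiso h).apply_symm_apply v

lemma Emap_symm_apply' {i j : P} (h : i ≤ j) (v : M.V i) :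
    (Emap M hiso h).symm (M.map h v) = v := (Emap M hiso h).symm_apply_apply v

lemma Mhat_apply_le {x y : P} (h : Cmp x y) (hle : x ≤ y) (v : M.V x) :
    Mhat M hiso h v = M.map hle v := by
  unfold Mhat; rw [dif_pos hle]

lemma Mhat_apply_ge {x y : P} (h : Cmp x y) (hge : y ≤ x) (v : M.V x) :
    Mhat M hiso h v = (Emap M hiso hge).symm v := by
  unfold Mhat
  by_cases hle : x ≤ y
  · rw [dif_pos hle]
    have hxy : x = y := le_antisymm hle hge
    subst hxy
    apply (hiso _ _ hge).injective
    change M.map hge (M.map hle v) = M.map hge ((Emap M hiso hge).symm v)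
    rw [Emap_symm_apply, map_comp_apply, map_refl_apply]
  · rw [dif_neg hle]; rfl

lemma Mhat_inl {x y : P} (h : x ≤ y) : Mhat M hiso (Or.inl h) = M.map h := by
  ext v; exact Mhat_apply_le M hiso _ h v

lemma Mhat_inr {x y : P} (h : y ≤ x) :
    Mhat M hiso (Or.inr h) = (Emap M hiso h).symm.toLinearMap := by
  ext v; exact Mhat_apply_ge M hiso _ h v

lemma Mhat_refl {x : P} (h : Cmp x x) : Mhat M hiso h = LinearMap.id := by
  ext v; exact Mhat_apply_le M hiso h (le_refl x) v |>.trans (map_refl_apply M _ v)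

/-- Triangle coherence: for pairwise comparable `x, b, c`,
`M̂(b,c) ∘ M̂(x,b) = M̂(x,c)`. -/
lemma Mhat_triangle {x b c : P} (hxb : Cmp x b) (hbc : Cmp b c) (hxc : Cmp x c) :
    (Mhat M hiso hbc).comp (Mhat M hiso hxb) = Mhat M hiso hxc := by
  ext v
  rw [LinearMap.comp_apply]
  by_cases h1 : x ≤ b <;> by_cases h2 : b ≤ c <;> by_cases h3 : x ≤ c
  · rw [Mhat_apply_le M hiso hxb h1, Mhat_apply_le M hiso hbc h2,
      Mhat_apply_le M hiso hxc h3, map_comp_apply]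
  · exact absurd (h1.trans h2) h3
  · have hcb := hbc.resolve_left h2
    rw [Mhat_apply_le M hiso hxb h1, Mhat_apply_ge M hiso hbc hcb,
      Mhat_apply_le M hiso hxc h3, LinearEquiv.symm_apply_eq, Emap_apply, map_comp_apply]
  · have hcb := hbc.resolve_left h2
    have hcx := hxc.resolve_left h3
    rw [Mhat_apply_le M hiso hxb h1, Mhat_apply_ge M hiso hbc hcb,
      Mhat_apply_ge M hiso hxc hcx]
    obtain ⟨w, rfl⟩ := (hiso _ _ hcx).surjective v
    rw [Emap_symm_apply', map_comp_apply, LinearEquiv.symm_apply_eq, Emap_apply]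
  · have hbx := hxb.resolve_left h1
    rw [Mhat_apply_ge M hiso hxb hbx, Mhat_apply_le M hiso hbc h2,
      Mhat_apply_le M hiso hxc h3]
    obtain ⟨w, rfl⟩ := (hiso _ _ hbx).surjective v
    rw [Emap_symm_apply']
    exact (map_comp_apply M hbx h3 w).symm
  · have hbx := hxb.resolve_left h1
    have hcx := hxc.resolve_left h3
    rw [Mhat_apply_ge M hiso hxb hbx, Mhat_apply_le M hiso hbc h2,
      Mhat_apply_ge M hiso hxc hcx]
    obtain ⟨w, rfl⟩ := (hiso _ _ hbx).surjective v
    rw [Emap_symm_apply', LinearEquiv.eq_symm_apply, Emap_apply, map_comp_apply]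
  · have hbx := hxb.resolve_left h1
    have hcb := hbc.resolve_left h2
    rw [Mhat_apply_ge M hiso hxb hbx, Mhat_apply_ge M hiso hbc hcb,
      Mhat_apply_le M hiso hxc h3]
    obtain ⟨w, rfl⟩ := (hiso _ _ hbx).surjective v
    rw [Emap_symm_apply', map_comp_apply, LinearEquiv.symm_apply_eq, Emap_apply,
      map_comp_apply, map_refl_apply]
  · have hbx := hxb.resolve_left h1
    have hcb := hbc.resolve_left h2
    have hcx := hxc.resolve_left h3
    rw [Mhat_apply_ge M hiso hxb hbx, Mhat_apply_ge M hiso hbc hcb,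
      Mhat_apply_ge M hiso hxc hcx]
    obtain ⟨w, rfl⟩ := (hiso _ _ hcx).surjective v
    rw [Emap_symm_apply']
    have hrw : M.map hcx w = M.map hbx (M.map hcb w) := by
      rw [map_comp_apply]
    rw [hrw, Emap_symm_apply', Emap_symm_apply']

/-- Peak lowering: `x ≤ b ≥ c` gives the same composite as `x ≤ b' ≥ c` for `b' ≤ b`. -/
lemma Mhat_peak {x c b b' : P} (hxb : x ≤ b) (hcb : c ≤ b) (hxb' : x ≤ b')
    (hcb' : c ≤ b') (hb : b' ≤ b) :
    (Mhat M hiso (Or.inr hcb)).comp (Mhat M hiso (Or.inl hxb))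
      = (Mhat M hiso (Or.inr hcb')).comp (Mhat M hiso (Or.inl hxb')) := by
  have t1 : (Mhat M hiso (Or.inl hb : Cmp b' b)).comp (Mhat M hiso (Or.inl hxb'))
      = Mhat M hiso (Or.inl hxb) :=
    Mhat_triangle M hiso (Or.inl hxb') (Or.inl hb) (Or.inl hxb)
  have t2 : (Mhat M hiso (Or.inr hcb : Cmp b c)).comp (Mhat M hiso (Or.inl hb : Cmp b' b))
      = Mhat M hiso (Or.inr hcb' : Cmp b' c) :=
    Mhat_triangle M hiso (Or.inl hb) (Or.inr hcb) (Or.inr hcb')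
  rw [← t1, ← LinearMap.comp_assoc, t2]

/-- Valley raising: `x ≥ v ≤ c` gives the same composite as `x ≥ v' ≤ c` for `v ≤ v'`. -/
lemma Mhat_valley {x c v v' : P} (hvx : v ≤ x) (hvc : v ≤ c) (hv'x : v' ≤ x)
    (hv'c : v' ≤ c) (hv : v ≤ v') :
    (Mhat M hiso (Or.inl hvc : Cmp v c)).comp (Mhat M hiso (Or.inr hvx : Cmp x v))
      = (Mhat M hiso (Or.inl hv'c : Cmp v' c)).comp (Mhat M hiso (Or.inr hv'x : Cmp x v')) := by
  have t1 : (Mhat M hiso (Or.inl hv'c : Cmp v' c)).comp (Mhat M hiso (Or.inl hv : Cmp v v'))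
      = Mhat M hiso (Or.inl hvc : Cmp v c) :=
    Mhat_triangle M hiso (Or.inl hv) (Or.inl hv'c) (Or.inl hvc)
  have t2 : (Mhat M hiso (Or.inl hv : Cmp v v')).comp (Mhat M hiso (Or.inr hvx : Cmp x v))
      = Mhat M hiso (Or.inr hv'x : Cmp x v') :=
    Mhat_triangle M hiso (Or.inr hvx) (Or.inl hv) (Or.inr hv'x)
  rw [← t1, LinearMap.comp_assoc, t2]

lemma zmap_consLe {x b y : P} (h : x ≤ b) (p : Zigzag P b y) :
    zigzagMap M hiso (.consLe h p)
      = (zigzagMap M hiso p).comp (Mhat M hiso (Or.inl h)) := by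
  rw [Mhat_inl]; rfl

lemma zmap_consGe {x b y : P} (h : b ≤ x) (p : Zigzag P b y) :
    zigzagMap M hiso (.consGe h p)
      = (zigzagMap M hiso p).comp (Mhat M hiso (Or.inr h)) := by
  rw [Mhat_inr]; rfl

lemma zmap_consO {x b y : P} (h : Cmp x b) (p : Zigzag P b y) :
    zigzagMap M hiso (consO h p) = (zigzagMap M hiso p).comp (Mhat M hiso h) := by
  unfold consO
  by_cases hle : x ≤ b
  · rw [dif_pos hle, zmap_consLe]
  · rw [dif_neg hle, zmap_consGe]

lemma zmap_bijective {a b : P} (p : Zigzag P a b) :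
    Function.Bijective (zigzagMap M hiso p) := by
  induction p with
  | single a => exact Function.bijective_id
  | consLe h p ih => exact ih.comp (hiso _ _ h)
  | consGe h p ih => exact ih.comp (Emap M hiso h).symm.bijective

lemma zmap_commute {N : Type} [AddCommGroup N] [Module F N] (τ : ∀ i : P, N →ₗ[F] M.V i)
    (hτ : ∀ (i j : P) (h : i ≤ j), (M.map h).comp (τ i) = τ j)
    {i j : P} (p : Zigzag P i j) :
    (zigzagMap M hiso p).comp (τ i) = τ j := by
  induction p with
  | single a => exact LinearMap.id_comp _
  | consLe h p ih =>
    show ((zigzagMap M hiso p).comp (M.map h)).comp (τ _) = τ _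
    rw [LinearMap.comp_assoc, hτ _ _ h, ih]
  | consGe h p ih =>
    show ((zigzagMap M hiso p).comp (Emap M hiso h).symm.toLinearMap).comp (τ _) = τ _
    have hstep : (Emap M hiso h).symm.toLinearMap.comp (τ _) = τ _ := by
      ext v
      simp only [LinearMap.comp_apply, LinearEquiv.coe_coe]
      rw [← LinearMap.congr_fun (hτ _ _ h) v]
      exact Emap_symm_apply' M hiso h _
    rw [LinearMap.comp_assoc, hstep, ih]

lemma zmap_ztrans {a b c : P} (p : Zigzag P a b) (q : Zigzag P b c) :
    zigzagMap M hiso (ztrans p q)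
      = (zigzagMap M hiso q).comp (zigzagMap M hiso p) := by
  induction p with
  | single a => exact (LinearMap.comp_id _).symm
  | consLe h p ih =>
    show (zigzagMap M hiso (ztrans p q)).comp (M.map h) = _
    rw [ih]
    rfl
  | consGe h p ih =>
    show (zigzagMap M hiso (ztrans p q)).comp _ = _
    rw [ih]
    rfl

lemma zmap_zrev {a b : P} (p : Zigzag P a b) :
    ∀ v, zigzagMap M hiso (zrev p) (zigzagMap M hiso p v) = v := by
  induction p with
  | single a => intro v; rfl
  | consLe h p ih =>
    intro v
    show zigzagMap M hiso (ztrans (zrev p) (.consGe h (.single _)))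
      (zigzagMap M hiso p (M.map h v)) = v
    rw [zmap_ztrans]
    simp only [LinearMap.comp_apply]
    rw [ih (M.map h v)]
    exact Emap_symm_apply' M hiso h v
  | consGe h p ih =>
    intro v
    show zigzagMap M hiso (ztrans (zrev p) (.consLe h (.single _)))
      (zigzagMap M hiso p ((Emap M hiso h).symm v)) = v
    rw [zmap_ztrans]
    simp only [LinearMap.comp_apply]
    rw [ih ((Emap M hiso h).symm v)]
    exact Emap_symm_apply M hiso h v

end Aux

section Geom

variable {J : Set (ℝ × ℝ)}

/-- The antidiagonal coordinate. -/
def Jg (z : ↥J) : ℝ := z.val.1 - z.val.2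

/-- `b` is a taut interior vertex with incomparable neighbours `x, c`. -/
def Mid (x b c : ↥J) : Prop :=
  ¬(x ≤ c) ∧ ¬(c ≤ x) ∧ (b.val = x.val ⊔ c.val ∨ b.val = x.val ⊓ c.val)

/-- Every interior vertex of the list is taut with incomparable neighbours. -/
def GoodL : List ↥J → Prop
  | a :: b :: c :: l => Mid a b c ∧ GoodL (b :: c :: l)
  | _ => True

lemma GoodL_cons {a b c : ↥J} {l : List ↥J} :
    GoodL (a :: b :: c :: l) ↔ Mid a b c ∧ GoodL (b :: c :: l) := Iff.rfl

lemma GoodL_two {a b : ↥J} : GoodL [a, b] := trivial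

lemma incomp_cases {x c : ↥J} (h1 : ¬ x ≤ c) (h2 : ¬ c ≤ x) :
    (c.val.1 < x.val.1 ∧ x.val.2 < c.val.2) ∨ (x.val.1 < c.val.1 ∧ c.val.2 < x.val.2) := by
  have hx : ¬ (x.val ≤ c.val) := fun h => h1 (Subtype.coe_le_coe.mp h)
  have hc : ¬ (c.val ≤ x.val) := fun h => h2 (Subtype.coe_le_coe.mp h)
  rw [Prod.le_def, not_and_or, not_le, not_le] at hx hc
  rcases hx with h | h <;> rcases hc with h' | h'
  · exact absurd h' (lt_asymm h)
  · exact Or.inl ⟨h, h'⟩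
  · exact Or.inr ⟨h', h⟩
  · exact absurd h' (lt_asymm h)

lemma gMid {x b c : ↥J} (h : Mid x b c) :
    (Jg x < Jg b ∧ Jg b < Jg c) ∨ (Jg c < Jg b ∧ Jg b < Jg x) := by
  obtain ⟨h1, h2, hb⟩ := h
  unfold Jg
  rcases incomp_cases h1 h2 with ⟨ha, ha2⟩ | ⟨ha, ha2⟩ <;> rcases hb with hb | hb
  · have e1 : b.val.1 = x.val.1 := by
      rw [hb]; exact sup_eq_left.mpr ha.le
    have e2 : b.val.2 = c.val.2 := by
      rw [hb]; exact sup_eq_right.mpr ha2.le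
    right; rw [e1, e2]
    exact ⟨sub_lt_sub_right ha _, sub_lt_sub_left ha2 _⟩
  · have e1 : b.val.1 = c.val.1 := by
      rw [hb]; exact inf_eq_right.mpr ha.le
    have e2 : b.val.2 = x.val.2 := by
      rw [hb]; exact inf_eq_left.mpr ha2.le
    right; rw [e1, e2]
    exact ⟨sub_lt_sub_left ha2 _, sub_lt_sub_right ha _⟩
  · have e1 : b.val.1 = c.val.1 := by
      rw [hb]; exact sup_eq_right.mpr ha.le
    have e2 : b.val.2 = x.val.2 := by
      rw [hb]; exact sup_eq_left.mpr ha2.le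
    left; rw [e1, e2]
    exact ⟨sub_lt_sub_right ha _, sub_lt_sub_left ha2 _⟩
  · have e1 : b.val.1 = x.val.1 := by
      rw [hb]; exact inf_eq_left.mpr ha.le
    have e2 : b.val.2 = c.val.2 := by
      rw [hb]; exact inf_eq_right.mpr ha2.le
    left; rw [e1, e2]
    exact ⟨sub_lt_sub_left ha2 _, sub_lt_sub_right ha _⟩

lemma chainG : ∀ (l : List ↥J) (a b : ↥J), GoodL (a :: b :: l) →
    (Jg a < Jg b → Jg b ≤ Jg ((b :: l).getLast (List.cons_ne_nil _ _)))
    ∧ (Jg b < Jg a → Jg ((b :: l).getLast (List.cons_ne_nil _ _)) ≤ Jg b) := by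
  intro l
  induction l with
  | nil =>
    intro a b _
    constructor <;> intro _ <;> exact le_refl _
  | cons c l ih =>
    intro a b hg
    rw [GoodL_cons] at hg
    obtain ⟨hmid, hg'⟩ := hg
    have hc := ih b c hg'
    have hm := gMid hmid
    have hlast : ((b :: c :: l).getLast (List.cons_ne_nil _ _))
        = ((c :: l).getLast (List.cons_ne_nil _ _)) := List.getLast_cons _
    constructor
    · intro h
      rcases hm with ⟨h1, h2⟩ | ⟨h1, h2⟩
      · rw [hlast]; exact le_trans h2.le (hc.1 h2)
      · linarith
    · intro h
      rcases hm with ⟨h1, h2⟩ | ⟨h1, h2⟩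
      · linarith
      · rw [hlast]; exact le_trans (hc.2 h1) h1.le

/-- Lowering the left neighbour of a taut valley keeps it taut. -/
lemma Mid_lower {b' b'' c₂ d : ↥J} (hm : Mid b' c₂ d) (hc : c₂ ≤ b'') (hbb : b'' ≤ b')
    (hne : c₂ ≠ b'') : Mid b'' c₂ d := by
  obtain ⟨h1, h2, hb⟩ := hm
  have hcb' : c₂ ≤ b' := hc.trans hbb
  have hcinf : c₂.val = b'.val ⊓ d.val := by
    rcases hb with hb | hb
    · exfalso
      have hbc : b'.val ≤ c₂.val := hb ▸ le_sup_left
      have hdc : d.val ≤ c₂.val := hb ▸ le_sup_right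
      have heq : b' = c₂ := le_antisymm (Subtype.coe_le_coe.mp hbc) hcb'
      exact h2 (Subtype.coe_le_coe.mp (heq ▸ hdc))
    · exact hb
  have hcd : c₂.val ≤ d.val := hcinf ▸ inf_le_right
  refine ⟨?_, ?_, Or.inr ?_⟩
  · intro hbd
    apply hne
    apply le_antisymm hc
    apply Subtype.coe_le_coe.mp
    calc b''.val ≤ b'.val ⊓ d.val :=
          le_inf (Subtype.coe_le_coe.mpr hbb) (Subtype.coe_le_coe.mpr hbd)
      _ = c₂.val := hcinf.symm
  · intro hdb
    exact h2 (hdb.trans hbb)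
  · apply le_antisymm
    · exact le_inf (Subtype.coe_le_coe.mpr hc) hcd
    · calc b''.val ⊓ d.val ≤ b'.val ⊓ d.val :=
            inf_le_inf_right _ (Subtype.coe_le_coe.mpr hbb)
        _ = c₂.val := hcinf.symm

/-- Raising the left neighbour of a taut peak keeps it taut. -/
lemma Mid_raise {b' b'' c₂ d : ↥J} (hm : Mid b' c₂ d) (hc : b'' ≤ c₂) (hbb : b' ≤ b'')
    (hne : c₂ ≠ b'') : Mid b'' c₂ d := by
  obtain ⟨h1, h2, hb⟩ := hm
  have hb'c : b' ≤ c₂ := hbb.trans hc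
  have hcsup : c₂.val = b'.val ⊔ d.val := by
    rcases hb with hb | hb
    · exact hb
    · exfalso
      have hcb : c₂.val ≤ b'.val := hb ▸ inf_le_left
      have hcd : c₂.val ≤ d.val := hb ▸ inf_le_right
      have heq : b' = c₂ := le_antisymm hb'c (Subtype.coe_le_coe.mp hcb)
      exact h1 (Subtype.coe_le_coe.mp (heq ▸ hcd))
  have hdc : d.val ≤ c₂.val := hcsup ▸ le_sup_right
  refine ⟨?_, ?_, Or.inl ?_⟩
  · intro hbd
    exact h1 (hbb.trans hbd)
  · intro hdb
    apply hne
    apply le_antisymm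
    · apply Subtype.coe_le_coe.mp
      calc c₂.val = b'.val ⊔ d.val := hcsup
        _ ≤ b''.val := sup_le (Subtype.coe_le_coe.mpr hbb) (Subtype.coe_le_coe.mpr hdb)
    · exact hc
  · apply le_antisymm
    · calc c₂.val = b'.val ⊔ d.val := hcsup
        _ ≤ b''.val ⊔ d.val := sup_le_sup_right (Subtype.coe_le_coe.mpr hbb) _
    · exact sup_le (Subtype.coe_le_coe.mpr hc) hdc

end Geom

section Reduce

variable {F : Type} [Field F] {J : Set (ℝ × ℝ)} (hconv : PosetConvex J)
  (M : PersistenceModule F ↥J)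
  (hiso : ∀ (i j : ↥J) (h : i ≤ j), Function.Bijective (M.map h))

lemma zpoints_getLast' {P : Type} [Preorder P] {a b : P} (p : Zigzag P a b) :
    (zpoints p).getLast? = some b := by
  rw [List.getLast?_eq_getLast (zpoints_ne_nil p), zpoints_getLast]

include hconv

/-- The key inductive step: a zigzag starting with two steps `x ~ b ~ c` can be
reduced to a good zigzag with the same composite. -/
lemma stepLemma (n : ℕ)
    (IH : ∀ m : ℕ, m < n → ∀ {x y : ↥J} (p : Zigzag ↥J x y), zlen p ≤ m →
      ∃ q : Zigzag ↥J x y, zigzagMap M hiso q = zigzagMap M hiso p ∧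
        zlen q ≤ zlen p ∧ GoodL (zpoints q))
    {x b c y : ↥J} (hxb : Cmp x b) (hbc : Cmp b c) (r : Zigzag ↥J c y)
    (hn : zlen r + 2 ≤ n) :
    ∃ q : Zigzag ↥J x y,
      zigzagMap M hiso q
        = ((zigzagMap M hiso r).comp (Mhat M hiso hbc)).comp (Mhat M hiso hxb)
      ∧ zlen q ≤ zlen r + 2 ∧ GoodL (zpoints q) := by
  by_cases hxc : Cmp x c
  · obtain ⟨q, hq1, hq2, hq3⟩ := IH (zlen r + 1) (by omega) (consO hxc r)
      (le_of_eq (zlen_consO _ _))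
    refine ⟨q, ?_, ?_, hq3⟩
    · rw [hq1, zmap_consO, LinearMap.comp_assoc, Mhat_triangle M hiso hxb hbc hxc]
    · rw [zlen_consO] at hq2; omega
  · have hn1 : ¬ x ≤ c := fun h => hxc (Or.inl h)
    have hn2 : ¬ c ≤ x := fun h => hxc (Or.inr h)
    rcases hxb with h1 | h1 <;> rcases hbc with h2 | h2
    · exact absurd (Or.inl (h1.trans h2)) hxc
    · -- up-peak : x ≤ b ≥ c
      have hmem : (x.val ⊔ c.val) ∈ J :=
        hconv x.val x.2 b.val b.2 _ le_sup_left
          (sup_le (Subtype.coe_le_coe.mpr h1) (Subtype.coe_le_coe.mpr h2))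
      obtain ⟨b', hb'val⟩ : ∃ w : ↥J, w.val = x.val ⊔ c.val := ⟨⟨_, hmem⟩, rfl⟩
      have hxb' : x ≤ b' := by
        rw [← Subtype.coe_le_coe, hb'val]; exact le_sup_left
      have hcb' : c ≤ b' := by
        rw [← Subtype.coe_le_coe, hb'val]; exact le_sup_right
      have hb'b : b' ≤ b := by
        rw [← Subtype.coe_le_coe, hb'val]
        exact sup_le (Subtype.coe_le_coe.mpr h1) (Subtype.coe_le_coe.mpr h2)
      have hpk := Mhat_peak M hiso h1 h2 hxb' hcb' hb'b
      obtain ⟨q₁, hq1, hq2, hq3⟩ := IH (zlen r + 1) (by omega) (consO (Or.inr hcb') r)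
        (le_of_eq (zlen_consO _ _))
      replace hq1 := hq1.trans (zmap_consO M hiso _ r)
      replace hq2 := hq2.trans_eq (zlen_consO _ r)
      have key : ((zigzagMap M hiso r).comp (Mhat M hiso (Or.inr h2))).comp
          (Mhat M hiso (Or.inl h1))
          = (zigzagMap M hiso q₁).comp (Mhat M hiso (Or.inl hxb')) := by
        rw [LinearMap.comp_assoc, hpk, ← LinearMap.comp_assoc, ← hq1]
      rw [key]
      clear hq1 key hpk
      revert hq2 hn
      revert r
      cases q₁ with
      | single =>
        intro r hq2 hn
        refine ⟨.consLe hxb' (.single _), ?_, ?_, GoodL_two⟩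
        · rw [zmap_consLe]
        · show 0 + 1 ≤ zlen r + 2
          omega
      | @consLe _ c₂ _ h₃ q₂ =>
        intro r hq2 hn
        have hxc₂ : Cmp x c₂ := Or.inl (hxb'.trans h₃)
        have tri := Mhat_triangle M hiso (Or.inl hxb') (Or.inl h₃) hxc₂
        have hlen : zlen (Zigzag.consLe h₃ q₂) = zlen q₂ + 1 := rfl
        obtain ⟨q, hqq1, hqq2, hqq3⟩ := IH (zlen r + 1) (by omega) (consO hxc₂ q₂)
          (by rw [zlen_consO]; omega)
        refine ⟨q, ?_, ?_, hqq3⟩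
        · rw [hqq1, zmap_consO, zmap_consLe, LinearMap.comp_assoc, tri]
        · rw [zlen_consO] at hqq2; omega
      | @consGe _ c₂ _ h₃ q₂ =>
        intro r hq2 hn
        have hlen : zlen (Zigzag.consGe h₃ q₂) = zlen q₂ + 1 := rfl
        by_cases hxc₂ : Cmp x c₂
        · have tri := Mhat_triangle M hiso (Or.inl hxb') (Or.inr h₃) hxc₂
          obtain ⟨q, hqq1, hqq2, hqq3⟩ := IH (zlen r + 1) (by omega) (consO hxc₂ q₂)
            (by rw [zlen_consO]; omega)
          refine ⟨q, ?_, ?_, hqq3⟩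
          · rw [hqq1, zmap_consO, zmap_consGe, LinearMap.comp_assoc, tri]
          · rw [zlen_consO] at hqq2; omega
        · have hm1 : ¬ x ≤ c₂ := fun h => hxc₂ (Or.inl h)
          have hm2 : ¬ c₂ ≤ x := fun h => hxc₂ (Or.inr h)
          have hmem2 : (x.val ⊔ c₂.val) ∈ J :=
            hconv x.val x.2 b'.val b'.2 _ le_sup_left
              (sup_le (Subtype.coe_le_coe.mpr hxb') (Subtype.coe_le_coe.mpr h₃))
          let b'' : ↥J := ⟨x.val ⊔ c₂.val, hmem2⟩
          have hxb'' : x ≤ b'' := Subtype.coe_le_coe.mp le_sup_left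
          have hcb'' : c₂ ≤ b'' := Subtype.coe_le_coe.mp le_sup_right
          have hb''b' : b'' ≤ b' := Subtype.coe_le_coe.mp
            (sup_le (Subtype.coe_le_coe.mpr hxb') (Subtype.coe_le_coe.mpr h₃))
          have hpk2 := Mhat_peak M hiso hxb' h₃ hxb'' hcb'' hb''b'
          refine ⟨.consLe hxb'' (.consGe hcb'' q₂), ?_, ?_, ?_⟩
          · rw [zmap_consLe, zmap_consGe, zmap_consGe, LinearMap.comp_assoc,
              LinearMap.comp_assoc, hpk2]
          · show zlen q₂ + 1 + 1 ≤ zlen r + 2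
            omega
          · obtain ⟨t, ht⟩ := zpoints_head q₂
            show GoodL (x :: b'' :: zpoints q₂)
            rw [ht, GoodL_cons]
            refine ⟨⟨hm1, hm2, Or.inl rfl⟩, ?_⟩
            have hq3' : GoodL (b' :: c₂ :: t) := by
              have hzp : zpoints (Zigzag.consGe h₃ q₂) = b' :: zpoints q₂ := rfl
              rw [hzp, ht] at hq3; exact hq3
            cases t with
            | nil => exact GoodL_two
            | cons d t' =>
              rw [GoodL_cons] at hq3' ⊢
              refine ⟨Mid_lower hq3'.1 hcb'' hb''b' ?_, hq3'.2⟩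
              intro he
              exact hm1 (le_of_le_of_eq hxb'' he.symm)
    · -- down-valley : x ≥ b ≤ c
      have hmem : (x.val ⊓ c.val) ∈ J :=
        hconv b.val b.2 x.val x.2 _
          (le_inf (Subtype.coe_le_coe.mpr h1) (Subtype.coe_le_coe.mpr h2)) inf_le_left
      obtain ⟨b', hb'val⟩ : ∃ w : ↥J, w.val = x.val ⊓ c.val := ⟨⟨_, hmem⟩, rfl⟩
      have hb'x : b' ≤ x := by
        rw [← Subtype.coe_le_coe, hb'val]; exact inf_le_left
      have hb'c : b' ≤ c := by
        rw [← Subtype.coe_le_coe, hb'val]; exact inf_le_right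
      have hbb' : b ≤ b' := by
        rw [← Subtype.coe_le_coe, hb'val]
        exact le_inf (Subtype.coe_le_coe.mpr h1) (Subtype.coe_le_coe.mpr h2)
      have hpk := Mhat_valley M hiso h1 h2 hb'x hb'c hbb'
      obtain ⟨q₁, hq1, hq2, hq3⟩ := IH (zlen r + 1) (by omega) (consO (Or.inl hb'c) r)
        (le_of_eq (zlen_consO _ _))
      replace hq1 := hq1.trans (zmap_consO M hiso _ r)
      replace hq2 := hq2.trans_eq (zlen_consO _ r)
      have key : ((zigzagMap M hiso r).comp (Mhat M hiso (Or.inl h2))).comp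
          (Mhat M hiso (Or.inr h1))
          = (zigzagMap M hiso q₁).comp (Mhat M hiso (Or.inr hb'x)) := by
        rw [LinearMap.comp_assoc, hpk, ← LinearMap.comp_assoc, ← hq1]
      rw [key]
      clear hq1 key hpk
      revert hq2 hn
      revert r
      cases q₁ with
      | single =>
        intro r hq2 hn
        refine ⟨.consGe hb'x (.single _), ?_, ?_, GoodL_two⟩
        · rw [zmap_consGe]
        · show 0 + 1 ≤ zlen r + 2
          omega
      | @consGe _ c₂ _ h₃ q₂ =>
        intro r hq2 hn
        have hxc₂ : Cmp x c₂ := Or.inr (h₃.trans hb'x)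
        have tri := Mhat_triangle M hiso (Or.inr hb'x) (Or.inr h₃) hxc₂
        have hlen : zlen (Zigzag.consGe h₃ q₂) = zlen q₂ + 1 := rfl
        obtain ⟨q, hqq1, hqq2, hqq3⟩ := IH (zlen r + 1) (by omega) (consO hxc₂ q₂)
          (by rw [zlen_consO]; omega)
        refine ⟨q, ?_, ?_, hqq3⟩
        · rw [hqq1, zmap_consO, zmap_consGe, LinearMap.comp_assoc, tri]
        · rw [zlen_consO] at hqq2; omega
      | @consLe _ c₂ _ h₃ q₂ =>
        intro r hq2 hn
        have hlen : zlen (Zigzag.consLe h₃ q₂) = zlen q₂ + 1 := rfl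
        by_cases hxc₂ : Cmp x c₂
        · have tri := Mhat_triangle M hiso (Or.inr hb'x) (Or.inl h₃) hxc₂
          obtain ⟨q, hqq1, hqq2, hqq3⟩ := IH (zlen r + 1) (by omega) (consO hxc₂ q₂)
            (by rw [zlen_consO]; omega)
          refine ⟨q, ?_, ?_, hqq3⟩
          · rw [hqq1, zmap_consO, zmap_consLe, LinearMap.comp_assoc, tri]
          · rw [zlen_consO] at hqq2; omega
        · have hm1 : ¬ x ≤ c₂ := fun h => hxc₂ (Or.inl h)
          have hm2 : ¬ c₂ ≤ x := fun h => hxc₂ (Or.inr h)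
          have hmem2 : (x.val ⊓ c₂.val) ∈ J :=
            hconv b'.val b'.2 x.val x.2 _
              (le_inf (Subtype.coe_le_coe.mpr hb'x) (Subtype.coe_le_coe.mpr h₃)) inf_le_left
          let b'' : ↥J := ⟨x.val ⊓ c₂.val, hmem2⟩
          have hb''x : b'' ≤ x := Subtype.coe_le_coe.mp inf_le_left
          have hb''c : b'' ≤ c₂ := Subtype.coe_le_coe.mp inf_le_right
          have hb'b'' : b' ≤ b'' := Subtype.coe_le_coe.mp
            (le_inf (Subtype.coe_le_coe.mpr hb'x) (Subtype.coe_le_coe.mpr h₃))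
          have hpk2 := Mhat_valley M hiso hb'x h₃ hb''x hb''c hb'b''
          refine ⟨.consGe hb''x (.consLe hb''c q₂), ?_, ?_, ?_⟩
          · rw [zmap_consGe, zmap_consLe, zmap_consLe, LinearMap.comp_assoc,
              LinearMap.comp_assoc, hpk2]
          · show zlen q₂ + 1 + 1 ≤ zlen r + 2
            omega
          · obtain ⟨t, ht⟩ := zpoints_head q₂
            show GoodL (x :: b'' :: zpoints q₂)
            rw [ht, GoodL_cons]
            refine ⟨⟨hm1, hm2, Or.inr rfl⟩, ?_⟩
            have hq3' : GoodL (b' :: c₂ :: t) := by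
              have hzp : zpoints (Zigzag.consLe h₃ q₂) = b' :: zpoints q₂ := rfl
              rw [hzp, ht] at hq3; exact hq3
            cases t with
            | nil => exact GoodL_two
            | cons d t' =>
              rw [GoodL_cons] at hq3' ⊢
              refine ⟨Mid_raise hq3'.1 hb''c hb'b'' ?_, hq3'.2⟩
              intro he
              exact hm2 (le_of_eq_of_le he hb''x)
    · exact absurd (Or.inr (h2.trans h1)) hxc

theorem reduceZ : ∀ (n : ℕ) {x y : ↥J} (p : Zigzag ↥J x y), zlen p ≤ n →
    ∃ q : Zigzag ↥J x y, zigzagMap M hiso q = zigzagMap M hiso p ∧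
      zlen q ≤ zlen p ∧ GoodL (zpoints q) := by
  intro n
  induction n using Nat.strong_induction_on with
  | _ n IH =>
    intro x y p hp
    cases p with
    | single => exact ⟨.single _, rfl, le_refl _, trivial⟩
    | consLe h p' =>
      cases p' with
      | single => exact ⟨.consLe h (.single _), rfl, le_refl _, GoodL_two⟩
      | consLe h2 r =>
        have hnn : zlen r + 2 ≤ n := hp
        obtain ⟨q, hq1, hq2, hq3⟩ := stepLemma hconv M hiso n IH (Or.inl h) (Or.inl h2) r hnn
        refine ⟨q, ?_, hq2, hq3⟩
        rw [hq1, zmap_consLe, zmap_consLe]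
      | consGe h2 r =>
        have hnn : zlen r + 2 ≤ n := hp
        obtain ⟨q, hq1, hq2, hq3⟩ := stepLemma hconv M hiso n IH (Or.inl h) (Or.inr h2) r hnn
        refine ⟨q, ?_, hq2, hq3⟩
        rw [hq1, zmap_consLe, zmap_consGe]
    | consGe h p' =>
      cases p' with
      | single => exact ⟨.consGe h (.single _), rfl, le_refl _, GoodL_two⟩
      | consLe h2 r =>
        have hnn : zlen r + 2 ≤ n := hp
        obtain ⟨q, hq1, hq2, hq3⟩ := stepLemma hconv M hiso n IH (Or.inr h) (Or.inl h2) r hnn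
        refine ⟨q, ?_, hq2, hq3⟩
        rw [hq1, zmap_consGe, zmap_consLe]
      | consGe h2 r =>
        have hnn : zlen r + 2 ≤ n := hp
        obtain ⟨q, hq1, hq2, hq3⟩ := stepLemma hconv M hiso n IH (Or.inr h) (Or.inr h2) r hnn
        refine ⟨q, ?_, hq2, hq3⟩
        rw [hq1, zmap_consGe, zmap_consGe]

end Reduce

section Final

variable {F : Type} [Field F] {J : Set (ℝ × ℝ)} (hconv : PosetConvex J)
  (M : PersistenceModule F ↥J)
  (hiso : ∀ (i j : ↥J) (h : i ≤ j), Function.Bijective (M.map h))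

lemma good_no_loop {x b c : ↥J} {t : List ↥J} (hg : GoodL (x :: b :: c :: t))
    (hlast : ((b :: c :: t).getLast (List.cons_ne_nil _ _)) = x) : False := by
  have hchain := chainG (c :: t) x b hg
  have hm := gMid (GoodL_cons.mp hg).1
  rcases hm with ⟨h1, h2⟩ | ⟨h1, h2⟩
  · have := hchain.1 h1
    rw [hlast] at this
    linarith
  · have := hchain.2 h2
    rw [hlast] at this
    linarith

include hconv

lemma loop_id {x : ↥J} (l : Zigzag ↥J x x) :
    zigzagMap M hiso l = LinearMap.id := by
  obtain ⟨q, hq1, _, hq3⟩ := reduceZ hconv M hiso (zlen l) l (le_refl _)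
  rw [← hq1]
  clear hq1
  have hlong : ∀ (b c : ↥J) (t : List ↥J), zpoints q = x :: b :: c :: t → False := by
    intro b c t hpts
    have hlast := zpoints_getLast' q
    rw [hpts] at hlast
    have hlast2 : ((b :: c :: t).getLast (List.cons_ne_nil _ _)) = x := by
      have := List.getLast?_eq_getLast (l := x :: b :: c :: t) (by simp)
      rw [hlast] at this
      have h2 := List.getLast_cons (l := b :: c :: t) (List.cons_ne_nil _ _) (a := x)
      rw [← h2]
      exact Option.some_injective _ this.symm
    rw [hpts] at hq3
    exact good_no_loop hq3 hlast2
  cases q with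
  | single => rfl
  | consLe h p' =>
    cases p' with
    | single =>
      ext v
      exact map_refl_apply M h v
    | consLe h2 r =>
      exfalso
      obtain ⟨t, ht⟩ := zpoints_head r
      exact hlong _ _ t (by show x :: _ :: zpoints r = _; rw [ht])
    | consGe h2 r =>
      exfalso
      obtain ⟨t, ht⟩ := zpoints_head r
      exact hlong _ _ t (by show x :: _ :: zpoints r = _; rw [ht])
  | consGe h p' =>
    cases p' with
    | single =>
      ext v
      show (Emap M hiso h).symm v = v
      apply (hiso _ _ h).injective
      rw [Emap_symm_apply, map_refl_apply]
    | consLe h2 r =>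
      exfalso
      obtain ⟨t, ht⟩ := zpoints_head r
      exact hlong _ _ t (by show x :: _ :: zpoints r = _; rw [ht])
    | consGe h2 r =>
      exfalso
      obtain ⟨t, ht⟩ := zpoints_head r
      exact hlong _ _ t (by show x :: _ :: zpoints r = _; rw [ht])

/-- Path independence of zigzag composites. -/
theorem pathIndep {x y : ↥J} (p q : Zigzag ↥J x y) :
    zigzagMap M hiso p = zigzagMap M hiso q := by
  have hloop := loop_id hconv M hiso (ztrans p (zrev q))
  ext v
  have h1 : zigzagMap M hiso (zrev q) (zigzagMap M hiso p v) = v := by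
    have := LinearMap.congr_fun hloop v
    rw [zmap_ztrans] at this
    exact this
  have h2 : zigzagMap M hiso (zrev q) (zigzagMap M hiso q v) = v := zmap_zrev M hiso q v
  exact (zmap_bijective M hiso (zrev q)).injective (h1.trans h2.symm)

end Final

/-- For `M` on a connected convex `J ⊆ (ℝ,≤)²` with all structure maps
isomorphisms and any `a ∈ J`, the cone with apex `M a` whose leg at `i` is the zigzag
composite `M(a ⇝ i)` is a limit cone; in particular `lim_J M ≅ M a`. -/
theorem statement3 (F : Type) [Field F] (J : Set (ℝ × ℝ))
    (hconv : PosetConvex J) (hconn : ZigzagConnected J)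
    (M : PersistenceModule F ↥J)
    (hiso : ∀ (i j : ↥J) (h : i ≤ j), Function.Bijective (M.map h))
    (a : ↥J) (pth : ∀ i : ↥J, Zigzag (↥J) a i) :
    IsLimitCone M (M.V a) (fun i => zigzagMap M hiso (pth i)) := by
  constructor
  · intro i j h
    have key : (M.map h).comp (zigzagMap M hiso (pth i))
        = zigzagMap M hiso (ztrans (pth i) (.consLe h (.single _))) := by
      rw [zmap_ztrans]
      ext v
      rfl
    rw [key]
    exact pathIndep hconv M hiso _ (pth j)
  · intro N _ _ τ hτ
    refine ⟨τ a, ?_, ?_⟩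
    · intro i
      exact zmap_commute M hiso τ hτ (pth i)
    · intro φ hφ
      have h1 := hφ a
      have h2 : (zigzagMap M hiso (pth a)).comp (τ a) = τ a :=
        zmap_commute M hiso τ hτ (pth a)
      ext v
      exact (zmap_bijective M hiso (pth a)).injective
        ((LinearMap.congr_fun h1 v).trans (LinearMap.congr_fun h2 v).symm)
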